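/- Let A: \overline{B}^k → [0,∞) be a C² function on the closed unit ball in ℝ^k satisfying −(1/c₀)·Id ≤ D²A(u) ≤ −c₀·Id for all u and having its unique maximum at a point m ∈ B^k_{c₀/√10}. Let φ(u,t) be the flow of the vector field u ↦ −(1−|u|²)∇A(u) on \overline{B}^k. Then for any δ < 1/4 there exists T = T(δ, c₀, A) ≥ 0 such that for every v ∈ \overline{B}^k with |v − m| ≥ δ, one has A(φ(v,T)) < A(0) − c₀/10 and |φ(v,T)| > c₀/4. -/

import Mathlib

open Filter Topology Metric
open scoped RealInnerProductSpace

private lemma myDecr {f f' : ℝ → ℝ} {a b : ℝ} (hab : a ≤ b)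
    (hd : ∀ t ∈ Set.Icc a b, HasDerivAt f (f' t) t)
    (h0 : ∀ t ∈ Set.Icc a b, f' t ≤ 0) : f b ≤ f a := by
  have hcont : ContinuousOn f (Set.Icc a b) := fun t ht =>
    (hd t ht).continuousAt.continuousWithinAt
  have hdiff : DifferentiableOn ℝ f (interior (Set.Icc a b)) := fun t ht =>
    ((hd t (interior_subset ht)).differentiableAt).differentiableWithinAt
  have := antitoneOn_of_deriv_nonpos (convex_Icc a b) hcont hdiff (fun t ht => by
    rw [(hd t (interior_subset ht)).deriv]; exact h0 t (interior_subset ht))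
  exact this (Set.left_mem_Icc.2 hab) (Set.right_mem_Icc.2 hab) hab

private lemma myIncr {f f' : ℝ → ℝ} {a b : ℝ} (hab : a ≤ b)
    (hd : ∀ t ∈ Set.Icc a b, HasDerivAt f (f' t) t)
    (h0 : ∀ t ∈ Set.Icc a b, 0 ≤ f' t) : f a ≤ f b := by
  have := myDecr (f := fun t => -f t) (f' := fun t => -f' t) hab
    (fun t ht => (hd t ht).neg) (fun t ht => neg_nonpos.2 (h0 t ht))
  have h2 : -f b ≤ -f a := this
  linarith

set_option maxHeartbeats 4000000 in
/-- Gradient-flow lemma (Lemma 5.5): for a `C²` function `A : \bar B^k → [0,∞)` with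
Hessian pinched between `-(1/c₀)·Id` and `-c₀·Id`, unique maximum at
`m ∈ B^k_{c₀/√10}`, and `φ` the flow of `u ↦ -(1-|u|²)∇A(u)` on the closed unit
ball, for any `0 < δ < 1/4` there is `T = T(δ, c₀, A) ≥ 0` such that every `v` in
the closed ball with `|v - m| ≥ δ` satisfies `A(φ(v,T)) < A(0) - c₀/10` and
`|φ(v,T)| > c₀/4`. -/
theorem stmt8 {k : ℕ} (c₀ : ℝ) (hc₀ : 0 < c₀) (hc₀1 : c₀ < 1)
    (A : EuclideanSpace ℝ (Fin k) → ℝ) (hA : ContDiff ℝ 2 A)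
    (hApos : ∀ u ∈ closedBall (0 : EuclideanSpace ℝ (Fin k)) 1, 0 ≤ A u)
    (hHess : ∀ u ∈ closedBall (0 : EuclideanSpace ℝ (Fin k)) 1,
      ∀ w : EuclideanSpace ℝ (Fin k),
        -(1 / c₀) * ‖w‖ ^ 2 ≤ ⟪fderiv ℝ (gradient A) u w, w⟫ ∧
        ⟪fderiv ℝ (gradient A) u w, w⟫ ≤ -c₀ * ‖w‖ ^ 2)
    (m : EuclideanSpace ℝ (Fin k)) (hm : ‖m‖ < c₀ / Real.sqrt 10)
    (hmax : IsMaxOn A (closedBall (0 : EuclideanSpace ℝ (Fin k)) 1) m)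
    (huniq : ∀ u ∈ closedBall (0 : EuclideanSpace ℝ (Fin k)) 1, A u = A m → u = m)
    (φ : EuclideanSpace ℝ (Fin k) → ℝ → EuclideanSpace ℝ (Fin k))
    (hφ0 : ∀ u, φ u 0 = u)
    (hφball : ∀ u ∈ closedBall (0 : EuclideanSpace ℝ (Fin k)) 1, ∀ t : ℝ, 0 ≤ t →
      φ u t ∈ closedBall (0 : EuclideanSpace ℝ (Fin k)) 1)
    (hφode : ∀ u ∈ closedBall (0 : EuclideanSpace ℝ (Fin k)) 1, ∀ t : ℝ, 0 ≤ t →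
      HasDerivAt (φ u) (-((1 - ‖φ u t‖ ^ 2) • gradient A (φ u t))) t)
    (δ : ℝ) (hδ : 0 < δ) (hδ4 : δ < 1 / 4) :
    ∃ T : ℝ, 0 ≤ T ∧ ∀ v ∈ closedBall (0 : EuclideanSpace ℝ (Fin k)) 1,
      δ ≤ ‖v - m‖ → A (φ v T) < A 0 - c₀ / 10 ∧ c₀ / 4 < ‖φ v T‖ := by
  -- basic facts about √10
  set s := Real.sqrt 10 with hs
  have hs0 : 0 < s := Real.sqrt_pos.2 (by norm_num)
  have hs2 : s ^ 2 = 10 := Real.sq_sqrt (by norm_num)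
  have hslb : 3.1615 ≤ s := by nlinarith
  have hsub : s ≤ 3.17 := by nlinarith
  have hlin : ∀ (C r : ℝ), HasDerivAt (fun y : ℝ => C * y) C r := fun C r => by
    simpa using (hasDerivAt_id r).const_mul C
  have hquad : ∀ (C r : ℝ), HasDerivAt (fun y : ℝ => C * y ^ 2) (C * (2 * r)) r := fun C r => by
    simpa using (hasDerivAt_pow 2 r).const_mul C
  -- differentiability facts
  have hAd : Differentiable ℝ A := hA.differentiable (by norm_num)
  have hfA : ∀ x : EuclideanSpace ℝ (Fin k), HasFDerivAt A ((InnerProductSpace.toDual ℝ (EuclideanSpace ℝ (Fin k))) (gradient A x)) x :=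
    fun x => (hAd x).hasGradientAt.hasFDerivAt
  have hgradC : ContDiff ℝ 1 (gradient A) := by
    have h1 : ContDiff ℝ 1 (fderiv ℝ A) := hA.fderiv_right (by norm_num)
    exact ((InnerProductSpace.toDual ℝ (EuclideanSpace ℝ (Fin k))).symm.contDiff).comp h1
  have hgradD : ∀ x : EuclideanSpace ℝ (Fin k), HasFDerivAt (gradient A) (fderiv ℝ (gradient A) x) x :=
    fun x => ((hgradC.differentiable (by norm_num)) x).hasFDerivAt
  -- the maximum point
  have hm1 : ‖m‖ < 1 := by
    have : c₀ / s < 1 := by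
      rw [div_lt_one hs0]; nlinarith
    linarith
  have hmB : m ∈ closedBall (0 : EuclideanSpace ℝ (Fin k)) 1 := by
    rw [mem_closedBall_zero_iff]; linarith
  have hgm : gradient A m = 0 := by
    have hloc : IsLocalMax A m := by
      refine hmax.filter_mono (le_principal_iff.2 ?_)
      refine Filter.mem_of_superset
        (Metric.ball_mem_nhds m (by linarith : (0:ℝ) < 1 - ‖m‖)) ?_
      intro x hx
      rw [mem_ball, dist_eq_norm] at hx
      rw [mem_closedBall_zero_iff]
      have hxe : x = x - m + m := by abel
      calc ‖x‖ = ‖x - m + m‖ := by rw [← hxe]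
        _ ≤ ‖x - m‖ + ‖m‖ := norm_add_le _ _
        _ ≤ 1 := by linarith
    have h0 : fderiv ℝ A m = 0 := hloc.fderiv_eq_zero
    show (InnerProductSpace.toDual ℝ (EuclideanSpace ℝ (Fin k))).symm (fderiv ℝ A m) = 0
    rw [h0]; simp
  -- key concavity inequalities
  have key : ∀ u ∈ closedBall (0 : EuclideanSpace ℝ (Fin k)) 1, ⟪gradient A u, u - m⟫ ≤ -c₀ * ‖u - m‖ ^ 2 ∧
      A u ≤ A m - c₀ / 2 * ‖u - m‖ ^ 2 ∧ A m - 1 / (2 * c₀) * ‖u - m‖ ^ 2 ≤ A u := by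
    intro u hu
    set w := u - m with hw
    set γ : ℝ → EuclideanSpace ℝ (Fin k) := fun t => m + t • w with hγ
    have hγB : ∀ t ∈ Set.Icc (0:ℝ) 1, γ t ∈ closedBall (0 : EuclideanSpace ℝ (Fin k)) 1 := by
      intro t ht
      have : γ t = (1 - t) • m + t • u := by
        simp only [hγ, hw, smul_sub, sub_smul, one_smul]; abel
      rw [this]
      exact (convex_closedBall (0:EuclideanSpace ℝ (Fin k)) 1) hmB hu (by linarith [ht.1, ht.2]) ht.1 (by ring)
    have hγd : ∀ t : ℝ, HasDerivAt γ w t := by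
      intro t
      simpa [hγ] using ((hasDerivAt_id t).smul_const w).const_add m
    set g : ℝ → ℝ := fun t => ⟪gradient A (γ t), w⟫ with hgdef
    have hgd : ∀ t : ℝ, HasDerivAt g (⟪fderiv ℝ (gradient A) (γ t) w, w⟫) t := by
      intro t
      have h1 : HasDerivAt (fun t => gradient A (γ t)) (fderiv ℝ (gradient A) (γ t) w) t :=
        (hgradD (γ t)).comp_hasDerivAt t (hγd t)
      have := h1.inner ℝ (hasDerivAt_const t w)
      exact this.congr_deriv (by simp)
    have hg0 : g 0 = 0 := by
      simp only [hgdef, hγ, zero_smul, add_zero, hgm, inner_zero_left]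
    have hAγd : ∀ t : ℝ, HasDerivAt (fun t => A (γ t)) (g t) t := by
      intro t
      have := (hfA (γ t)).comp_hasDerivAt t (hγd t)
      exact this.congr_deriv (by rw [InnerProductSpace.toDual_apply_apply])
    -- upper bound on g on [0,1]
    have hgub : ∀ t ∈ Set.Icc (0:ℝ) 1, g t ≤ -c₀ * ‖w‖ ^ 2 * t := by
      intro t ht
      have := myDecr (f := fun r => g r + c₀ * ‖w‖ ^ 2 * r)
        (f' := fun r => ⟪fderiv ℝ (gradient A) (γ r) w, w⟫ + c₀ * ‖w‖ ^ 2) ht.1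
        (fun r _ => (hgd r).add (hlin (c₀ * ‖w‖ ^ 2) r))
        (fun r hr => by
          have hrI : r ∈ Set.Icc (0:ℝ) 1 := ⟨hr.1, le_trans hr.2 ht.2⟩
          have := (hHess (γ r) (hγB r hrI) w).2
          show ⟪fderiv ℝ (gradient A) (γ r) w, w⟫ + c₀ * ‖w‖ ^ 2 ≤ 0
          linarith)
      have h2 : g t + c₀ * ‖w‖ ^ 2 * t ≤ g 0 + c₀ * ‖w‖ ^ 2 * 0 := this
      rw [hg0] at h2
      linarith
    -- lower bound on g on [0,1]
    have hglb : ∀ t ∈ Set.Icc (0:ℝ) 1, -(1 / c₀) * ‖w‖ ^ 2 * t ≤ g t := by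
      intro t ht
      have := myIncr (f := fun r => g r + (1 / c₀) * ‖w‖ ^ 2 * r)
        (f' := fun r => ⟪fderiv ℝ (gradient A) (γ r) w, w⟫ + (1 / c₀) * ‖w‖ ^ 2) ht.1
        (fun r _ => (hgd r).add (hlin ((1 / c₀) * ‖w‖ ^ 2) r))
        (fun r hr => by
          have hrI : r ∈ Set.Icc (0:ℝ) 1 := ⟨hr.1, le_trans hr.2 ht.2⟩
          have := (hHess (γ r) (hγB r hrI) w).1
          show 0 ≤ ⟪fderiv ℝ (gradient A) (γ r) w, w⟫ + (1 / c₀) * ‖w‖ ^ 2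
          linarith)
      have h2 : g 0 + (1 / c₀) * ‖w‖ ^ 2 * 0 ≤ g t + (1 / c₀) * ‖w‖ ^ 2 * t := this
      rw [hg0] at h2
      linarith
    have hγ0 : γ 0 = m := by simp [hγ]
    have hγ1 : γ 1 = u := by simp [hγ, hw]
    refine ⟨?_, ?_, ?_⟩
    · have := hgub 1 (by norm_num)
      rw [hgdef] at this
      simpa [hγ1] using this
    · have := myDecr (f := fun t => A (γ t) + (c₀ * ‖w‖ ^ 2 / 2) * t ^ 2)
        (f' := fun t => g t + (c₀ * ‖w‖ ^ 2 / 2) * (2 * t)) (by norm_num : (0:ℝ) ≤ 1)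
        (fun t _ => (hAγd t).add (hquad (c₀ * ‖w‖ ^ 2 / 2) t))
        (fun t ht => by
          have := hgub t ht
          show g t + (c₀ * ‖w‖ ^ 2 / 2) * (2 * t) ≤ 0
          nlinarith)
      have h2 : A (γ 1) + (c₀ * ‖w‖ ^ 2 / 2) * 1 ^ 2 ≤ A (γ 0) + (c₀ * ‖w‖ ^ 2 / 2) * 0 ^ 2 := this
      rw [hγ0, hγ1] at h2
      nlinarith
    · have := myIncr (f := fun t => A (γ t) + ((1 / c₀) * ‖w‖ ^ 2 / 2) * t ^ 2)
        (f' := fun t => g t + ((1 / c₀) * ‖w‖ ^ 2 / 2) * (2 * t)) (by norm_num : (0:ℝ) ≤ 1)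
        (fun t _ => (hAγd t).add (hquad ((1 / c₀) * ‖w‖ ^ 2 / 2) t))
        (fun t ht => by
          have := hglb t ht
          show 0 ≤ g t + ((1 / c₀) * ‖w‖ ^ 2 / 2) * (2 * t)
          nlinarith)
      have h2 : A (γ 0) + ((1 / c₀) * ‖w‖ ^ 2 / 2) * 0 ^ 2 ≤
          A (γ 1) + ((1 / c₀) * ‖w‖ ^ 2 / 2) * 1 ^ 2 := this
      rw [hγ0, hγ1] at h2
      have h2c : 1 / (2 * c₀) * ‖w‖ ^ 2 = (1 / c₀) * ‖w‖ ^ 2 / 2 := by ring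
      nlinarith
  -- the time
  refine ⟨1 / (c₀ * δ ^ 2), by positivity, ?_⟩
  set T := 1 / (c₀ * δ ^ 2) with hT
  have hT0 : 0 < T := by positivity
  intro v hv hvm
  have hΦB : ∀ t : ℝ, 0 ≤ t → φ v t ∈ closedBall (0 : EuclideanSpace ℝ (Fin k)) 1 := hφball v hv
  have hode : ∀ t : ℝ, 0 ≤ t → HasDerivAt (φ v)
      (-((1 - ‖φ v t‖ ^ 2) • gradient A (φ v t))) t := hφode v hv
  have hnle : ∀ t : ℝ, 0 ≤ t → ‖φ v t‖ ≤ 1 := by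
    intro t ht; have := hΦB t ht; rwa [mem_closedBall_zero_iff] at this
  -- derivative of A along the flow
  have hψd : ∀ t : ℝ, 0 ≤ t → HasDerivAt (fun r => A (φ v r))
      (-((1 - ‖φ v t‖ ^ 2) * ‖gradient A (φ v t)‖ ^ 2)) t := by
    intro t ht
    have := (hfA (φ v t)).comp_hasDerivAt t (hode t ht)
    refine this.congr_deriv ?_
    rw [InnerProductSpace.toDual_apply_apply, inner_neg_right, real_inner_smul_right,
      real_inner_self_eq_norm_sq]
  -- derivative of ρ t = ⟪φ v t - m, φ v t - m⟫ along the flow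
  have hρd : ∀ t : ℝ, 0 ≤ t → HasDerivAt (fun r => ⟪φ v r - m, φ v r - m⟫)
      (2 * ((1 - ‖φ v t‖ ^ 2) * (-⟪gradient A (φ v t), φ v t - m⟫))) t := by
    intro t ht
    have hsub : HasDerivAt (fun r => φ v r - m)
        (-((1 - ‖φ v t‖ ^ 2) • gradient A (φ v t))) t := (hode t ht).sub_const m
    have := hsub.inner ℝ hsub
    refine this.congr_deriv ?_
    rw [inner_neg_right, inner_neg_left, real_inner_smul_right, real_inner_smul_left,
      real_inner_comm (φ v t - m) (gradient A (φ v t))]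
    ring
  -- ρ is bounded below by δ² on [0, T]
  have hρlb : ∀ t ∈ Set.Icc (0:ℝ) T, δ ^ 2 ≤ ⟪φ v t - m, φ v t - m⟫ := by
    intro t ht
    have := myIncr (f := fun r => ⟪φ v r - m, φ v r - m⟫)
      (f' := fun r => 2 * ((1 - ‖φ v r‖ ^ 2) * (-⟪gradient A (φ v r), φ v r - m⟫))) ht.1
      (fun r hr => hρd r hr.1)
      (fun r hr => by
        have h1 := (key (φ v r) (hΦB r hr.1)).1
        have h2 := hnle r hr.1
        have h3 : (0:ℝ) ≤ ‖φ v r - m‖ ^ 2 := by positivity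
        show 0 ≤ 2 * ((1 - ‖φ v r‖ ^ 2) * (-⟪gradient A (φ v r), φ v r - m⟫))
        have h4 : 0 ≤ 1 - ‖φ v r‖ ^ 2 := by nlinarith [norm_nonneg (φ v r)]
        have h5 : 0 ≤ -⟪gradient A (φ v r), φ v r - m⟫ := by nlinarith
        nlinarith [mul_nonneg h4 h5])
    have h2 : ⟪φ v 0 - m, φ v 0 - m⟫ ≤ ⟪φ v t - m, φ v t - m⟫ := this
    have h0 : ⟪φ v 0 - m, φ v 0 - m⟫ = ‖v - m‖ ^ 2 := by
      rw [hφ0, real_inner_self_eq_norm_sq]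
    rw [h0] at h2
    nlinarith
  -- main claim: A (φ v T) < A m - c₀ / 6
  have hmain : A (φ v T) < A m - c₀ / 6 := by
    by_contra hcon
    push_neg at hcon
    -- then A (φ v t) ≥ A m - c₀/6 on all of [0, T]
    have hstay : ∀ t ∈ Set.Icc (0:ℝ) T, A m - c₀ / 6 ≤ A (φ v t) := by
      intro t ht
      have := myDecr (f := fun r => A (φ v r))
        (f' := fun r => -((1 - ‖φ v r‖ ^ 2) * ‖gradient A (φ v r)‖ ^ 2)) ht.2
        (fun r hr => hψd r (le_trans ht.1 hr.1))
        (fun r hr => by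
          have h2 := hnle r (le_trans ht.1 hr.1)
          have h3 : (0:ℝ) ≤ ‖gradient A (φ v r)‖ ^ 2 := by positivity
          show -((1 - ‖φ v r‖ ^ 2) * ‖gradient A (φ v r)‖ ^ 2) ≤ 0
          have h4 : 0 ≤ 1 - ‖φ v r‖ ^ 2 := by nlinarith [norm_nonneg (φ v r)]
          nlinarith [mul_nonneg h4 h3])
      have h2 : A (φ v T) ≤ A (φ v t) := this
      linarith
    -- hence the flow stays in a region where the speed is definite
    have hspeed : ∀ t ∈ Set.Icc (0:ℝ) T,
        -((1 - ‖φ v t‖ ^ 2) * ‖gradient A (φ v t)‖ ^ 2) ≤ -(c₀ ^ 2 * δ ^ 2 / 5) := by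
      intro t ht
      set x := ‖φ v t - m‖ with hx
      have hx0 : 0 ≤ x := norm_nonneg _
      have hupper := (key (φ v t) (hΦB t ht.1)).2.1
      have hst := hstay t ht
      have hx2 : x ^ 2 ≤ 1 / 3 := by nlinarith
      have hx58 : x ≤ 0.5774 := by nlinarith
      have hy : ‖m‖ ≤ 0.3164 := by
        have h1 : ‖m‖ * s < c₀ := (lt_div_iff₀ hs0).mp hm
        nlinarith [norm_nonneg m, mul_nonneg (norm_nonneg m) (sub_nonneg.2 hslb)]
      have hnorm : ‖φ v t‖ ≤ x + ‖m‖ := by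
        have hxe : φ v t = φ v t - m + m := by abel
        calc ‖φ v t‖ = ‖φ v t - m + m‖ := by rw [← hxe]
          _ ≤ ‖φ v t - m‖ + ‖m‖ := norm_add_le _ _
      have hfrac : 1 / 5 ≤ 1 - ‖φ v t‖ ^ 2 := by
        have h4 : ‖φ v t‖ ^ 2 ≤ (x + ‖m‖) ^ 2 := by
          nlinarith [norm_nonneg (φ v t), norm_nonneg m]
        nlinarith [norm_nonneg m]
      -- lower bound on the gradient
      have hρ := hρlb t ht
      rw [real_inner_self_eq_norm_sq] at hρ
      have hkey := (key (φ v t) (hΦB t ht.1)).1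
      have hcs : -⟪gradient A (φ v t), φ v t - m⟫ ≤ ‖gradient A (φ v t)‖ * x := by
        have h := real_inner_le_norm (gradient A (φ v t)) (-(φ v t - m))
        rw [inner_neg_right, norm_neg] at h
        exact h
      have hxpos : δ ≤ x := by nlinarith
      have hgl : c₀ * x ≤ ‖gradient A (φ v t)‖ := by
        have h5 : c₀ * x ^ 2 ≤ ‖gradient A (φ v t)‖ * x := by nlinarith
        have h6 : 0 < x := lt_of_lt_of_le hδ hxpos
        nlinarith
      have hg2 : c₀ ^ 2 * δ ^ 2 ≤ ‖gradient A (φ v t)‖ ^ 2 := by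
        nlinarith [norm_nonneg (gradient A (φ v t))]
      nlinarith [norm_nonneg (gradient A (φ v t))]
    have := myDecr (f := fun r => A (φ v r) + (c₀ ^ 2 * δ ^ 2 / 5) * r)
      (f' := fun r => -((1 - ‖φ v r‖ ^ 2) * ‖gradient A (φ v r)‖ ^ 2) + c₀ ^ 2 * δ ^ 2 / 5)
      (le_of_lt hT0)
      (fun r hr => (hψd r hr.1).add (hlin (c₀ ^ 2 * δ ^ 2 / 5) r))
      (fun r hr => by
        have := hspeed r hr
        show -((1 - ‖φ v r‖ ^ 2) * ‖gradient A (φ v r)‖ ^ 2) + c₀ ^ 2 * δ ^ 2 / 5 ≤ 0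
        linarith)
    have h2 : A (φ v T) + (c₀ ^ 2 * δ ^ 2 / 5) * T ≤
        A (φ v 0) + (c₀ ^ 2 * δ ^ 2 / 5) * 0 := this
    have hTe : (c₀ ^ 2 * δ ^ 2 / 5) * T = c₀ / 5 := by
      rw [hT]; field_simp
    have hv0 : A (φ v 0) = A v := by rw [hφ0]
    have hvm' : A v ≤ A m := hmax hv
    rw [hv0, hTe] at h2
    have hcT : A m - c₀ / 6 ≤ A (φ v T) := hcon
    linarith
  -- conclude
  have hφT : φ v T ∈ closedBall (0 : EuclideanSpace ℝ (Fin k)) 1 := hΦB T (le_of_lt hT0)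
  constructor
  · -- A (φ v T) < A 0 - c₀ / 10
    have h0B : (0 : EuclideanSpace ℝ (Fin k)) ∈ closedBall (0 : EuclideanSpace ℝ (Fin k)) 1 := by rw [mem_closedBall_zero_iff]; simp
    have hb0 := (key 0 h0B).2.2
    have hnm : ‖(0 : EuclideanSpace ℝ (Fin k)) - m‖ = ‖m‖ := by rw [zero_sub, norm_neg]
    rw [hnm] at hb0
    have hm2 : ‖m‖ ^ 2 < c₀ ^ 2 / 10 := by
      have h1 : ‖m‖ * s < c₀ := (lt_div_iff₀ hs0).mp hm
      nlinarith [norm_nonneg m, mul_nonneg (norm_nonneg m) (sub_nonneg.2 hslb)]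
    have h2c : 0 < 1 / (2 * c₀) := by positivity
    have : 1 / (2 * c₀) * ‖m‖ ^ 2 < 1 / (2 * c₀) * (c₀ ^ 2 / 10) := by
      exact mul_lt_mul_of_pos_left hm2 h2c
    have he : 1 / (2 * c₀) * (c₀ ^ 2 / 10) = c₀ / 20 := by field_simp; ring
    linarith
  · -- c₀ / 4 < ‖φ v T‖
    set z := ‖φ v T - m‖ with hz
    have hz0 : 0 ≤ z := norm_nonneg _
    have hb := (key (φ v T) hφT).2.2
    rw [← hz] at hb
    have hz2 : c₀ ^ 2 / 3 < z ^ 2 := by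
      have h2c : 0 < 2 * c₀ := by linarith
      have h7 : c₀ / 6 < 1 / (2 * c₀) * z ^ 2 := by linarith
      have h8 := mul_lt_mul_of_pos_right h7 h2c
      have h9 : 1 / (2 * c₀) * z ^ 2 * (2 * c₀) = z ^ 2 := by field_simp
      rw [h9] at h8
      nlinarith
    have hcomp : (c₀ * (1 / 4 + 1 / s)) ^ 2 < c₀ ^ 2 / 3 := by
      have h1 : (1 / 4 + 1 / s) ^ 2 < 1 / 3 := by
        have h2 : (1 / 4 + 1 / s) ^ 2 * s ^ 2 = (s / 4 + 1) ^ 2 := by field_simp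
        rw [hs2] at h2
        have hq : (s / 4 + 1) ^ 2 ≤ (3.17 / 4 + 1) ^ 2 := by nlinarith
        linarith
      nlinarith [mul_lt_mul_of_pos_left h1 (by positivity : (0:ℝ) < c₀ ^ 2)]
    have hzgt : c₀ * (1 / 4 + 1 / s) < z := by
      exact lt_of_pow_lt_pow_left₀ 2 hz0 (by linarith)
    have htri : z ≤ ‖φ v T‖ + ‖m‖ := by
      calc z = ‖φ v T - m‖ := rfl
        _ ≤ ‖φ v T‖ + ‖m‖ := norm_sub_le _ _
    have hm' : ‖m‖ < c₀ / s := hm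
    have : c₀ * (1 / 4 + 1 / s) - c₀ / s = c₀ / 4 := by field_simp; ring
    linarith
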